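/- Let X be a Poisson random variable with parameter λ > 0. For every function h : ℕ → ℝ with sup_{x∈ℕ} |h(x+1) − h(x)| ≤ 1 and for every b ≥ 0, P(h(X) − E[h(X)] ≥ b) ≤ exp(−(b/4) log(1 + b/(2λ))). -/

import Mathlib

open MeasureTheory ProbabilityTheory Real Filter
open scoped ENNReal NNReal

namespace PoissonConc
set_option maxHeartbeats 1000000

noncomputable abbrev pi' (r : NNReal) : Measure ℕ := poissonMeasure r

noncomputable def pp (r : NNReal) (k : ℕ) : ℝ := poissonPMFReal r k

lemma pp_def (r : NNReal) (k : ℕ) : pp r k = Real.exp (-(r:ℝ)) * (r:ℝ)^k / k.factorial := rfl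

lemma pp_nonneg (r : NNReal) (k : ℕ) : 0 ≤ pp r k := poissonPMFReal_nonneg

lemma psing (r : NNReal) (k : ℕ) : (pi' r) {k} = ENNReal.ofReal (pp r k) := by
  exact poissonMeasure_singleton r k

lemma hasSum_exp (x : ℝ) : HasSum (fun k : ℕ => x^k / k.factorial) (Real.exp x) := by
  rw [Real.exp_eq_exp_ℝ]
  exact NormedSpace.expSeries_div_hasSum_exp x

lemma lint (r : NNReal) (f : ℕ → ℝ≥0∞) :
    ∫⁻ k, f k ∂(pi' r) = ∑' k, ENNReal.ofReal (pp r k) * f k := by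
  rw [lintegral_countable' f]
  simp only [psing, mul_comm]

lemma lint_ofReal (r : NNReal) (v : ℕ → ℝ) (hv : ∀ k, 0 ≤ v k)
    (hs : Summable (fun k => pp r k * v k)) :
    ∫⁻ k, ENNReal.ofReal (v k) ∂(pi' r) = ENNReal.ofReal (∑' k, pp r k * v k) := by
  rw [lint, ENNReal.ofReal_tsum_of_nonneg (fun k => mul_nonneg (pp_nonneg r k) (hv k)) hs]
  congr 1
  ext k
  rw [ENNReal.ofReal_mul (pp_nonneg r k)]


lemma pp_hasSum (r : NNReal) : HasSum (pp r) 1 := poissonPMFRealSum r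

lemma pp_summable (r : NNReal) : Summable (pp r) := (pp_hasSum r).summable

lemma pp_tsum (r : NNReal) : ∑' k, pp r k = 1 := (pp_hasSum r).tsum_eq

lemma summable_pp_mul_id (r : NNReal) : Summable (fun k => pp r k * k) := by
  rw [← summable_nat_add_iff 1]
  have : (fun k : ℕ => pp r (k + 1) * (↑(k + 1) : ℝ)) = fun k => (r:ℝ) * pp r k := by
    ext k
    simp only [pp_def, Nat.factorial_succ, pow_succ]
    push_cast
    have h1 : ((k:ℝ) + 1) ≠ 0 := by positivity
    field_simp
  rw [this]
  exact (pp_summable r).mul_left _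

lemma summable_pp_mul (r : NNReal) (v : ℕ → ℝ) (c : ℝ) (hb : ∀ k, |v k| ≤ c + k) :
    Summable (fun k => pp r k * v k) := by
  rw [← summable_abs_iff]
  apply Summable.of_nonneg_of_le (fun k => abs_nonneg _) ?_
    ((((pp_summable r).mul_right c)).add (summable_pp_mul_id r))
  intro k
  rw [abs_mul, abs_of_nonneg (pp_nonneg r k), ← mul_add]
  exact mul_le_mul_of_nonneg_left (hb k) (pp_nonneg r k)

lemma integrable_of_bound (r : NNReal) (g : ℕ → ℝ) (c : ℝ) (hb : ∀ k, |g k| ≤ c + k) :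
    Integrable g (pi' r) := by
  constructor
  · exact (measurable_of_countable g).aestronglyMeasurable
  · rw [hasFiniteIntegral_iff_norm]
    calc ∫⁻ k, ENNReal.ofReal ‖g k‖ ∂(pi' r)
        ≤ ∫⁻ k, ENNReal.ofReal (c + k) ∂(pi' r) := by
          apply lintegral_mono
          intro k
          exact ENNReal.ofReal_le_ofReal ((Real.norm_eq_abs _) ▸ hb k)
      _ = ENNReal.ofReal (∑' k, pp r k * (c + k)) := by
          apply lint_ofReal
          · intro k; exact le_trans (abs_nonneg (g k)) (hb k)
          · exact summable_pp_mul r _ c (fun k => by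
              rw [abs_of_nonneg (le_trans (abs_nonneg (g k)) (hb k))])
      _ < ⊤ := ENNReal.ofReal_lt_top

lemma int_eq (r : NNReal) (g : ℕ → ℝ) (hg : Integrable g (pi' r)) :
    ∫ k, g k ∂(pi' r) = ∑' k, pp r k * g k := by
  rw [integral_countable' hg]
  congr 1
  ext k
  rw [measureReal_def, psing, ENNReal.toReal_ofReal (pp_nonneg r k), smul_eq_mul]

lemma pp_conv (a b : NNReal) (k : ℕ) :
    pp (a + b) k = ∑ x ∈ Finset.range (k + 1), pp a x * pp b (k - x) := by
  have hterm : ∀ x ∈ Finset.range (k + 1),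
      pp a x * pp b (k - x)
        = Real.exp (-((a:ℝ) + b)) * ((a:ℝ)^x * (b:ℝ)^(k-x) * (k.choose x)) / k.factorial := by
    intro x hx
    have hxk : x ≤ k := Nat.lt_succ_iff.mp (Finset.mem_range.mp hx)
    have hch : (k.choose x : ℝ) = k.factorial / (x.factorial * (k - x).factorial) :=
      Nat.cast_choose ℝ hxk
    have h1 : (x.factorial : ℝ) ≠ 0 := Nat.cast_ne_zero.mpr (Nat.factorial_ne_zero x)
    have h2 : ((k - x).factorial : ℝ) ≠ 0 := Nat.cast_ne_zero.mpr (Nat.factorial_ne_zero _)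
    have h3 : (k.factorial : ℝ) ≠ 0 := Nat.cast_ne_zero.mpr (Nat.factorial_ne_zero k)
    simp only [pp_def]
    rw [hch, neg_add, Real.exp_add]
    field_simp
    try ring
  rw [Finset.sum_congr rfl hterm, ← Finset.sum_div, ← Finset.mul_sum, ← add_pow]
  simp [pp_def]

lemma conv (a b : NNReal) :
    pi' (a + b) = Measure.map (fun p : ℕ × ℕ => p.1 + p.2) ((pi' a).prod (pi' b)) := by
  apply MeasureTheory.Measure.ext_iff_singleton.mpr
  intro k
  rw [Measure.map_apply (measurable_of_countable _) (measurableSet_singleton k)]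
  have hpre : (fun p : ℕ × ℕ => p.1 + p.2) ⁻¹' {k}
      = ⋃ x ∈ Finset.range (k + 1), {((x, k - x) : ℕ × ℕ)} := by
    ext ⟨x, y⟩
    simp only [Set.mem_preimage, Set.mem_singleton_iff, Set.mem_iUnion, Finset.mem_range,
      Nat.lt_succ_iff, Prod.mk.injEq]
    constructor
    · intro hxy
      exact ⟨x, by omega, rfl, by omega⟩
    · rintro ⟨x', h1, rfl, rfl⟩
      omega
  rw [hpre, measure_biUnion_finset ?_ (fun x _ => measurableSet_singleton _)]
  · have hsingle : ∀ x : ℕ, ∀ y : ℕ, ((pi' a).prod (pi' b)) {((x, y) : ℕ × ℕ)}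
        = ENNReal.ofReal (pp a x * pp b y) := by
      intro x y
      rw [← Set.singleton_prod_singleton, Measure.prod_prod, psing, psing,
        ← ENNReal.ofReal_mul (pp_nonneg a x)]
    rw [psing, pp_conv]
    rw [ENNReal.ofReal_sum_of_nonneg (fun x _ => mul_nonneg (pp_nonneg a x) (pp_nonneg b _))]
    exact Finset.sum_congr rfl (fun x _ => (hsingle x (k - x)).symm)
  · intro x hx y hy hxy
    simp only [Set.disjoint_singleton, ne_eq, Prod.mk.injEq, not_and]
    intro hc
    exact absurd hc hxy

lemma conv_lint (a b : NNReal) (f : ℕ → ℝ≥0∞) :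
    ∫⁻ k, f k ∂(pi' (a + b)) = ∫⁻ x, ∫⁻ y, f (x + y) ∂(pi' b) ∂(pi' a) := by
  rw [conv a b, lintegral_map (measurable_of_countable f) (measurable_of_countable _)]
  exact lintegral_prod _ (measurable_of_countable _).aemeasurable

lemma conv_int (a b : NNReal) (g : ℕ → ℝ) (c : ℝ) (hb : ∀ k, |g k| ≤ c + k) :
    ∫ k, g k ∂(pi' (a + b)) = ∫ x, (∫ y, g (x + y) ∂(pi' b)) ∂(pi' a) := by
  have hig : Integrable (fun p : ℕ × ℕ => g (p.1 + p.2)) ((pi' a).prod (pi' b)) := by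
    have h1 : Integrable g (Measure.map (fun p : ℕ × ℕ => p.1 + p.2) ((pi' a).prod (pi' b))) :=
      conv a b ▸ integrable_of_bound (a + b) g c hb
    exact (integrable_map_measure (measurable_of_countable g).aestronglyMeasurable
      (measurable_of_countable _).aemeasurable).mp h1
  rw [conv a b, integral_map (measurable_of_countable _).aemeasurable
    (measurable_of_countable g).aestronglyMeasurable]
  exact integral_prod _ hig


/-! ### Elementary real analysis lemmas -/

noncomputable def psi (t : ℝ) : ℝ := Real.exp t - 1 - t

noncomputable def Cc (t : ℝ) : ℝ := Real.exp (t + Real.exp t) + 4 * t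

noncomputable def ppR (e : ℝ) (k : ℕ) : ℝ := Real.exp (-e) * e^k / k.factorial

lemma pp_eq_ppR (r : NNReal) : pp r = ppR (r : ℝ) := rfl

lemma ppR_nonneg {e : ℝ} (he : 0 ≤ e) (k : ℕ) : 0 ≤ ppR e k := by
  unfold ppR; positivity

lemma ppR_summable (e : ℝ) : Summable (ppR e) := by
  apply ((Real.summable_pow_div_factorial e).mul_left (Real.exp (-e))).congr
  intro k
  simp [ppR, mul_div_assoc]

lemma psi_nonneg {t : ℝ} (ht : 0 ≤ t) : 0 ≤ psi t := by
  have := Real.add_one_le_exp t; unfold psi; linarith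

lemma one_sub_le_exp_neg (x : ℝ) : 1 - x ≤ Real.exp (-x) := by
  have := Real.add_one_le_exp (-x); linarith

lemma exp_sub_one_le (x : ℝ) : Real.exp x - 1 ≤ x * Real.exp x := by
  have h := mul_le_mul_of_nonneg_right (one_sub_le_exp_neg x) (Real.exp_pos x).le
  have h2 : Real.exp (-x) * Real.exp x = 1 := by
    rw [← Real.exp_add]; simp
  nlinarith

lemma exp_neg_add_le (t : ℝ) (ht : 0 ≤ t) : Real.exp (-t) + 2*t ≤ Real.exp t := by
  rcases eq_or_lt_of_le ht with h | h
  · simp [← h]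
  · have hs := Real.self_lt_sinh_iff.mpr h
    rw [Real.sinh_eq] at hs
    linarith

lemma psi0 {t v : ℝ} (ht : 0 ≤ t) (hv : |v| ≤ t) :
    Real.exp v - 1 - v ≤ Real.exp t - 1 - t := by
  obtain ⟨hv1, hv2⟩ := abs_le.mp hv
  rcases le_or_gt 0 v with h0 | h0
  · have h2 : (t - v) + 1 ≤ Real.exp (t - v) := Real.add_one_le_exp _
    have h3 : (1:ℝ) ≤ Real.exp v := Real.one_le_exp h0
    have h4 : Real.exp t = Real.exp (t - v) * Real.exp v := by
      rw [← Real.exp_add]; ring_nf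
    nlinarith
  · have h2 : Real.exp (v + t) - 1 ≤ (v + t) * Real.exp (v + t) := exp_sub_one_le _
    have h3 : Real.exp v ≤ 1 := Real.exp_le_one_iff.mpr h0.le
    have h4 : Real.exp (v + t) = Real.exp v * Real.exp t := by rw [← Real.exp_add]
    have h5 : Real.exp (-t) + 2*t ≤ Real.exp t := exp_neg_add_le t ht
    have h6 : Real.exp (-t) * Real.exp t = 1 := by rw [← Real.exp_add]; simp
    have h7 : 0 ≤ v + t := by linarith
    -- e^v - e^{-t} = e^{-t}(e^{v+t} - 1) ≤ e^{-t}(v+t)e^{v+t} = (v+t)e^v ≤ v+t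
    have h8 : Real.exp v - Real.exp (-t) ≤ v + t := by
      have e1 : Real.exp (-t) * (Real.exp (v+t) - 1) = Real.exp v - Real.exp (-t) := by
        rw [mul_sub, ← Real.exp_add, mul_one]; ring_nf
      have e2 : Real.exp (-t) * (Real.exp (v+t) - 1) ≤ Real.exp (-t) * ((v+t) * Real.exp (v+t)) :=
        mul_le_mul_of_nonneg_left h2 (Real.exp_pos _).le
      have e3 : Real.exp (-t) * ((v+t) * Real.exp (v+t)) = (v+t) * Real.exp v := by
        rw [h4]; linear_combination (v + t) * Real.exp v * h6
      nlinarith [Real.exp_pos v]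
    linarith

lemma tsum_shift2 (f : ℕ → ℝ) (hf : Summable f) :
    ∑' y, f y = f 0 + f 1 + ∑' y, f (y + 2) := by
  rw [Summable.tsum_eq_zero_add hf, Summable.tsum_eq_zero_add ((summable_nat_add_iff 1).mpr hf)]
  rw [show (fun y : ℕ => f (y + 1 + 1)) = (fun y : ℕ => f (y + 2)) from rfl]
  ring

lemma summable_one_div_factorial : Summable (fun k : ℕ => 1 / (k.factorial : ℝ)) := by
  simpa using Real.summable_pow_div_factorial 1

lemma tsum_one_div_factorial_add_one_le : ∑' y : ℕ, 1 / (((y+1).factorial : ℕ) : ℝ) ≤ 2 := by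
  have hs := summable_one_div_factorial
  have he : ∑' k : ℕ, 1 / (k.factorial : ℝ) = Real.exp 1 := by
    have := (hasSum_exp 1).tsum_eq
    simpa using this
  have hsplit := Summable.tsum_eq_zero_add hs
  have h1 : Real.exp 1 < 2.7182818286 := Real.exp_one_lt_d9
  have : ∑' y : ℕ, 1 / (((y+1).factorial : ℕ) : ℝ) = Real.exp 1 - 1 / (Nat.factorial 0 : ℝ) := by
    rw [← he, hsplit]; ring
  rw [this]
  norm_num
  linarith


/-! ### The core one-step estimate (pure real analysis) -/

lemma exp_neg_pow_le (e : ℝ) (he0 : 0 ≤ e) (he1 : e ≤ 1) (y : ℕ) :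
    Real.exp (-e) * e^(y+2) ≤ e^2 := by
  have he' : Real.exp (-e) ≤ 1 := Real.exp_le_one_iff.mpr (by linarith)
  have hpow : e^(y+2) ≤ e^2 := pow_le_pow_of_le_one he0 he1 (by omega)
  nlinarith [pow_nonneg he0 (y+2)]

lemma ppR_tail_mean_bound (e : ℝ) (he0 : 0 ≤ e) (he1 : e ≤ 1) (y : ℕ) :
    ppR e (y+2) * ((y+2 : ℕ) : ℝ) ≤ e^2 * (1 / (((y+1).factorial : ℕ) : ℝ)) := by
  unfold ppR
  have hfac : (((y+2).factorial : ℕ) : ℝ) = ((y+2 : ℕ) : ℝ) * (((y+1).factorial : ℕ) : ℝ) := by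
    rw [show (y+2) = (y+1)+1 from rfl, Nat.factorial_succ]
    push_cast
    ring
  have hf1 : (0:ℝ) < (((y+1).factorial : ℕ) : ℝ) := by positivity
  have hy2 : (0:ℝ) < ((y+2 : ℕ) : ℝ) := by positivity
  have hkey := exp_neg_pow_le e he0 he1 y
  have hL : Real.exp (-e) * e^(y+2) / (((y+2).factorial : ℕ) : ℝ) * ((y+2:ℕ):ℝ)
      = Real.exp (-e) * e^(y+2) * (1 / (((y+1).factorial : ℕ) : ℝ)) := by
    rw [hfac]
    field_simp
  rw [hL]
  exact mul_le_mul_of_nonneg_right hkey (by positivity)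

lemma step2 (e t δ : ℝ) (he0 : 0 ≤ e) (he1 : e ≤ 1) (ht : 0 ≤ t)
    (hδ1 : -1 ≤ δ) (hδ2 : δ ≤ 1) :
    Real.exp (t*(e*δ) + e * psi t) + e^2 * Real.exp (Real.exp t)
      ≤ Real.exp (t*(e*δ) + e * psi t + e^2 * Real.exp (t + Real.exp t)) := by
  set M := t*(e*δ) + e * psi t with hM
  set c := e^2 * Real.exp (t + Real.exp t) with hc
  have hc0 : 0 ≤ c := by positivity
  have hMt : -t ≤ M := by
    have hd : -1 ≤ e*δ := by nlinarith
    have h1 : 0 ≤ t * (e*δ + 1) := mul_nonneg ht (by linarith)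
    have h2 : 0 ≤ e * psi t := mul_nonneg he0 (psi_nonneg ht)
    rw [hM]; nlinarith
  have h2 : 1 + c ≤ Real.exp c := by have := Real.add_one_le_exp c; linarith
  have h3 : Real.exp (-t) ≤ Real.exp M := Real.exp_le_exp.mpr hMt
  have h4 : e^2 * Real.exp (Real.exp t) = c * Real.exp (-t) := by
    rw [hc, mul_assoc, ← Real.exp_add]
    have he' : t + Real.exp t + -t = Real.exp t := by ring
    rw [he']
  calc Real.exp M + e^2 * Real.exp (Real.exp t)
      = Real.exp M + c * Real.exp (-t) := by rw [h4]
    _ ≤ Real.exp M + c * Real.exp M := by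
        exact add_le_add_right (mul_le_mul_of_nonneg_left h3 hc0) _
    _ = Real.exp M * (1 + c) := by ring
    _ ≤ Real.exp M * Real.exp c := mul_le_mul_of_nonneg_left h2 (Real.exp_pos _).le
    _ = Real.exp (M + c) := (Real.exp_add _ _).symm

lemma core (e t : ℝ) (he0 : 0 ≤ e) (he1 : e ≤ 1) (ht : 0 ≤ t) (u : ℕ → ℝ)
    (hu0 : u 0 = 0) (hu : ∀ y : ℕ, |u y| ≤ y) :
    ∑' y, ppR e y * Real.exp (t * u y)
      ≤ Real.exp (t * (∑' y, ppR e y * u y) + e * psi t + e^2 * Cc t) := by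
  set δ := u 1 with hδdef
  have hδ : |δ| ≤ 1 := by simpa using hu 1
  obtain ⟨hδ1, hδ2⟩ := abs_le.mp hδ
  -- pointwise exponential bound
  have hexp_u : ∀ y : ℕ, Real.exp (t * u y) ≤ (Real.exp t)^y := by
    intro y
    rw [← Real.exp_nat_mul]
    apply Real.exp_le_exp.mpr
    have h1 : u y ≤ y := (abs_le.mp (hu y)).2
    calc t * u y ≤ t * y := mul_le_mul_of_nonneg_left h1 ht
      _ = (y : ℝ) * t := by ring
  have hA_nonneg : ∀ y, 0 ≤ ppR e y * Real.exp (t * u y) :=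
    fun y => mul_nonneg (ppR_nonneg he0 y) (Real.exp_pos _).le
  have hA_le : ∀ y, ppR e y * Real.exp (t * u y)
      ≤ Real.exp (-e) * (e * Real.exp t)^y / y.factorial := by
    intro y
    calc ppR e y * Real.exp (t * u y) ≤ ppR e y * (Real.exp t)^y :=
          mul_le_mul_of_nonneg_left (hexp_u y) (ppR_nonneg he0 y)
      _ = Real.exp (-e) * (e * Real.exp t)^y / y.factorial := by
          unfold ppR; rw [mul_pow]; ring
  have hSB : Summable (fun y : ℕ => Real.exp (-e) * (e * Real.exp t)^y / y.factorial) := by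
    apply ((Real.summable_pow_div_factorial (e * Real.exp t)).mul_left (Real.exp (-e))).congr
    intro k
    rw [mul_div_assoc]
  have hSA : Summable (fun y => ppR e y * Real.exp (t * u y)) :=
    Summable.of_nonneg_of_le hA_nonneg hA_le hSB
  have hppR0 : ppR e 0 = Real.exp (-e) := by simp [ppR]
  have hppR1 : ppR e 1 = Real.exp (-e) * e := by simp [ppR]
  -- tail bound for the exponential sum
  have htail : ∑' y, ppR e (y+2) * Real.exp (t * u (y+2)) ≤ e^2 * Real.exp (Real.exp t) := by
    have hW : ∀ y : ℕ, ppR e (y+2) * Real.exp (t * u (y+2))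
        ≤ e^2 * ((Real.exp t)^(y+2) / ((y+2).factorial : ℝ)) := by
      intro y
      have h1 : ppR e (y+2) * Real.exp (t * u (y+2)) ≤ ppR e (y+2) * (Real.exp t)^(y+2) :=
        mul_le_mul_of_nonneg_left (hexp_u _) (ppR_nonneg he0 _)
      have h2 : ppR e (y+2) ≤ e^2 / ((y+2).factorial : ℝ) := by
        unfold ppR
        have hfac : (0:ℝ) < ((y+2).factorial : ℝ) := by positivity
        rw [div_le_div_iff_of_pos_right hfac]
        have he' : Real.exp (-e) ≤ 1 := Real.exp_le_one_iff.mpr (by linarith)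
        have hpow : e^(y+2) ≤ e^2 := pow_le_pow_of_le_one he0 he1 (by omega)
        nlinarith [pow_nonneg he0 (y+2)]
      calc ppR e (y+2) * Real.exp (t * u (y+2)) ≤ ppR e (y+2) * (Real.exp t)^(y+2) := h1
        _ ≤ (e^2 / ((y+2).factorial : ℝ)) * (Real.exp t)^(y+2) :=
            mul_le_mul_of_nonneg_right h2 (pow_nonneg (Real.exp_pos t).le _)
        _ = e^2 * ((Real.exp t)^(y+2) / ((y+2).factorial : ℝ)) := by ring
    have hWs : Summable (fun y : ℕ => e^2 * ((Real.exp t)^(y+2) / ((y+2).factorial : ℝ))) :=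
      (((summable_nat_add_iff 2).mpr (Real.summable_pow_div_factorial (Real.exp t))).mul_left _)
    have hAs2 : Summable (fun y => ppR e (y+2) * Real.exp (t * u (y+2))) :=
      (summable_nat_add_iff 2).mpr hSA
    calc ∑' y, ppR e (y+2) * Real.exp (t * u (y+2))
        ≤ ∑' y : ℕ, e^2 * ((Real.exp t)^(y+2) / ((y+2).factorial : ℝ)) :=
          hAs2.tsum_le_tsum hW hWs
      _ = e^2 * ∑' y : ℕ, (Real.exp t)^(y+2) / ((y+2).factorial : ℝ) := tsum_mul_left
      _ ≤ e^2 * Real.exp (Real.exp t) := by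
          apply mul_le_mul_of_nonneg_left ?_ (sq_nonneg e)
          set W : ℕ → ℝ := fun k => (Real.exp t)^k / (k.factorial : ℝ) with hWdef
          have hsW : Summable W := Real.summable_pow_div_factorial (Real.exp t)
          have hfull : ∑' k, W k = Real.exp (Real.exp t) := (hasSum_exp (Real.exp t)).tsum_eq
          have h0 : 0 ≤ W 0 := by positivity
          have h1 : 0 ≤ W 1 := by positivity
          have := tsum_shift2 W hsW
          calc ∑' y : ℕ, (Real.exp t)^(y+2) / ((y+2).factorial : ℝ)
              = ∑' y, W (y+2) := by rfl
            _ ≤ ∑' k, W k := by rw [this]; linarith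
            _ = Real.exp (Real.exp t) := hfull
  -- the split of the main sum
  have hsplit := tsum_shift2 _ hSA
  -- step 1 : head terms
  have hpsi0 : Real.exp (t*δ) - 1 - t*δ ≤ psi t := by
    unfold psi
    apply psi0 ht
    rw [abs_mul, abs_of_nonneg ht]
    nlinarith
  have hstep1 : ppR e 0 * Real.exp (t * u 0) + ppR e 1 * Real.exp (t * u 1)
      ≤ Real.exp (t*(e*δ) + e * psi t) := by
    rw [hu0, hppR0, hppR1, mul_zero, Real.exp_zero, mul_one, ← hδdef]
    have hle1 : 1 + e * Real.exp (t*δ) ≤ Real.exp (e * Real.exp (t*δ)) := by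
      have := Real.add_one_le_exp (e * Real.exp (t*δ)); linarith
    have hB : Real.exp (-e) * Real.exp (e * Real.exp (t*δ)) = Real.exp (e * Real.exp (t*δ) - e) := by
      rw [← Real.exp_add]; ring_nf
    have hC : e * Real.exp (t*δ) - e ≤ t*(e*δ) + e * psi t := by
      nlinarith [mul_le_mul_of_nonneg_left hpsi0 he0]
    calc Real.exp (-e) + Real.exp (-e) * e * Real.exp (t*δ)
        = Real.exp (-e) * (1 + e * Real.exp (t*δ)) := by ring
      _ ≤ Real.exp (-e) * Real.exp (e * Real.exp (t*δ)) :=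
          mul_le_mul_of_nonneg_left hle1 (Real.exp_pos _).le
      _ = Real.exp (e * Real.exp (t*δ) - e) := hB
      _ ≤ Real.exp (t*(e*δ) + e * psi t) := Real.exp_le_exp.mpr hC
  -- step 2: absorb the tail into the exponential
  have hstep2 := step2 e t δ he0 he1 ht hδ1 hδ2
  -- mean estimate
  -- summability of the mean series and its absolute version
  have hSid : Summable (fun y : ℕ => ppR e y * y) := by
    rw [← summable_nat_add_iff 1]
    apply ((ppR_summable e).mul_left e).congr
    intro k
    show e * ppR e k = ppR e (k+1) * ((k+1 : ℕ) : ℝ)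
    unfold ppR
    have h1 : ((k:ℝ) + 1) ≠ 0 := by positivity
    rw [Nat.factorial_succ, pow_succ]
    push_cast
    field_simp
  have hSuabs : Summable (fun y => |ppR e y * u y|) := by
    apply Summable.of_nonneg_of_le (fun y => abs_nonneg _) ?_ hSid
    intro y
    rw [abs_mul, abs_of_nonneg (ppR_nonneg he0 y)]
    exact mul_le_mul_of_nonneg_left (hu y) (ppR_nonneg he0 y)
  have hSu : Summable (fun y => ppR e y * u y) := summable_abs_iff.mp hSuabs
  -- split of the mean
  have hmean_split : ∑' y, ppR e y * u y
      = Real.exp (-e) * e * δ + ∑' y, ppR e (y+2) * u (y+2) := by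
    rw [tsum_shift2 _ hSu, hu0, mul_zero, hppR1, ← hδdef, zero_add]
  -- tail of the mean
  have htail2 : |∑' y, ppR e (y+2) * u (y+2)| ≤ 3 * e^2 := by
    have hb : ∀ y : ℕ, |ppR e (y+2) * u (y+2)| ≤ e^2 * (1 / (((y+1).factorial : ℕ) : ℝ)) := by
      intro y
      rw [abs_mul, abs_of_nonneg (ppR_nonneg he0 _)]
      have h1 : ppR e (y+2) * |u (y+2)| ≤ ppR e (y+2) * ((y+2 : ℕ) : ℝ) :=
        mul_le_mul_of_nonneg_left (hu _) (ppR_nonneg he0 _)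
      have h2 : ppR e (y+2) * ((y+2 : ℕ) : ℝ) ≤ e^2 * (1 / (((y+1).factorial : ℕ) : ℝ)) :=
        ppR_tail_mean_bound e he0 he1 y
      linarith
    have hbs : Summable (fun y : ℕ => e^2 * (1 / (((y+1).factorial : ℕ) : ℝ))) :=
      (((summable_nat_add_iff 1).mpr summable_one_div_factorial).mul_left _)
    have hs2 : Summable (fun y => |ppR e (y+2) * u (y+2)|) :=
      (summable_nat_add_iff (f := fun y => |ppR e y * u y|) 2).mpr hSuabs
    calc |∑' y, ppR e (y+2) * u (y+2)| ≤ ∑' y, |ppR e (y+2) * u (y+2)| := by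
          have h := norm_tsum_le_tsum_norm (f := fun y => ppR e (y+2) * u (y+2))
            (by simpa [Real.norm_eq_abs, abs_mul] using hs2)
          simpa [Real.norm_eq_abs, abs_mul] using h
      _ ≤ ∑' y : ℕ, e^2 * (1 / (((y+1).factorial : ℕ) : ℝ)) := hs2.tsum_le_tsum hb hbs
      _ = e^2 * ∑' y : ℕ, 1 / (((y+1).factorial : ℕ) : ℝ) := tsum_mul_left
      _ ≤ e^2 * 2 := mul_le_mul_of_nonneg_left tsum_one_div_factorial_add_one_le (sq_nonneg e)
      _ ≤ 3 * e^2 := by nlinarith [sq_nonneg e]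
  -- lower bound on the mean
  have hmean : e*δ - 4*e^2 ≤ ∑' y, ppR e y * u y := by
    rw [hmean_split]
    obtain ⟨htl, _⟩ := abs_le.mp htail2
    have hx1 : 1 - e ≤ Real.exp (-e) := one_sub_le_exp_neg e
    have hx2 : Real.exp (-e) ≤ 1 := Real.exp_le_one_iff.mpr (by linarith)
    have hE : Real.exp (-e) * e * δ ≥ e * δ - e^2 := by
      nlinarith [mul_nonneg (mul_nonneg he0 (by linarith : (0:ℝ) ≤ 1 - Real.exp (-e)))
          (by linarith : (0:ℝ) ≤ 1 - δ),
        mul_nonneg (mul_nonneg he0 (by linarith : (0:ℝ) ≤ 1 - Real.exp (-e)))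
          (by linarith : (0:ℝ) ≤ 1 + δ),
        mul_le_mul_of_nonneg_left (by linarith : 1 - Real.exp (-e) ≤ e) he0]
    linarith
  -- conclusion
  have hfinal : t*(e*δ) + e * psi t + e^2 * Real.exp (t + Real.exp t)
      ≤ t * (∑' y, ppR e y * u y) + e * psi t + e^2 * Cc t := by
    have h1 : t * (e*δ - 4*e^2) ≤ t * (∑' y, ppR e y * u y) :=
      mul_le_mul_of_nonneg_left hmean ht
    unfold Cc
    nlinarith [sq_nonneg e]
  calc ∑' y, ppR e y * Real.exp (t * u y)
      = ppR e 0 * Real.exp (t * u 0) + ppR e 1 * Real.exp (t * u 1)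
        + ∑' y, ppR e (y+2) * Real.exp (t * u (y+2)) := hsplit
    _ ≤ Real.exp (t*(e*δ) + e * psi t) + e^2 * Real.exp (Real.exp t) := by linarith
    _ ≤ Real.exp (t*(e*δ) + e * psi t + e^2 * Real.exp (t + Real.exp t)) := hstep2
    _ ≤ Real.exp (t * (∑' y, ppR e y * u y) + e * psi t + e^2 * Cc t) :=
        Real.exp_le_exp.mpr hfinal


/-! ### Standalone summability lemmas -/

lemma summable_mul_exp (e t : ℝ) (he0 : 0 ≤ e) (ht : 0 ≤ t) (u : ℕ → ℝ)
    (hu : ∀ y : ℕ, |u y| ≤ y) :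
    Summable (fun y => ppR e y * Real.exp (t * u y)) := by
  have hexp_u : ∀ y : ℕ, Real.exp (t * u y) ≤ (Real.exp t)^y := by
    intro y
    rw [← Real.exp_nat_mul]
    apply Real.exp_le_exp.mpr
    have h1 : u y ≤ y := (abs_le.mp (hu y)).2
    calc t * u y ≤ t * y := mul_le_mul_of_nonneg_left h1 ht
      _ = (y : ℝ) * t := by ring
  have hSB : Summable (fun y : ℕ => Real.exp (-e) * (e * Real.exp t)^y / y.factorial) := by
    apply ((Real.summable_pow_div_factorial (e * Real.exp t)).mul_left (Real.exp (-e))).congr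
    intro k
    rw [mul_div_assoc]
  apply Summable.of_nonneg_of_le
    (fun y => mul_nonneg (ppR_nonneg he0 y) (Real.exp_pos _).le) ?_ hSB
  intro y
  calc ppR e y * Real.exp (t * u y) ≤ ppR e y * (Real.exp t)^y :=
        mul_le_mul_of_nonneg_left (hexp_u y) (ppR_nonneg he0 y)
    _ = Real.exp (-e) * (e * Real.exp t)^y / y.factorial := by
        unfold ppR; rw [mul_pow]; ring

lemma summable_mul_lin (e : ℝ) (he0 : 0 ≤ e) (u : ℕ → ℝ) (hu : ∀ y : ℕ, |u y| ≤ y) :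
    Summable (fun y => ppR e y * u y) := by
  have hSid : Summable (fun y : ℕ => ppR e y * y) := by
    rw [← summable_nat_add_iff 1]
    apply ((ppR_summable e).mul_left e).congr
    intro k
    show e * ppR e k = ppR e (k+1) * ((k+1 : ℕ) : ℝ)
    unfold ppR
    have h1 : ((k:ℝ) + 1) ≠ 0 := by positivity
    rw [Nat.factorial_succ, pow_succ]
    push_cast
    field_simp
  apply summable_abs_iff.mp
  apply Summable.of_nonneg_of_le (fun y => abs_nonneg _) ?_ hSid
  intro y
  rw [abs_mul, abs_of_nonneg (ppR_nonneg he0 y)]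
  exact mul_le_mul_of_nonneg_left (hu y) (ppR_nonneg he0 y)

/-! ### Lipschitz utilities -/

lemma lip_growth {g : ℕ → ℝ} (hg : ∀ x : ℕ, |g (x+1) - g x| ≤ 1) (x d : ℕ) :
    |g (x + d) - g x| ≤ d := by
  induction d with
  | zero => simp
  | succ n ih =>
      have h1 := hg (x + n)
      have h2 : g (x + (n+1)) - g x = (g ((x+n)+1) - g (x+n)) + (g (x+n) - g x) := by
        rw [show x + (n+1) = (x+n)+1 from rfl]
        ring
      calc |g (x+(n+1)) - g x| ≤ |g ((x+n)+1) - g (x+n)| + |g (x+n) - g x| := by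
            rw [h2]; exact abs_add_le _ _
        _ ≤ 1 + n := add_le_add h1 ih
        _ = ((n+1 : ℕ) : ℝ) := by push_cast; ring

lemma lip_bound {g : ℕ → ℝ} (hg : ∀ x : ℕ, |g (x+1) - g x| ≤ 1) (k : ℕ) :
    |g k| ≤ |g 0| + k := by
  have h := lip_growth hg 0 k
  simp only [Nat.zero_add] at h
  calc |g k| = |(g k - g 0) + g 0| := by ring_nf
    _ ≤ |g k - g 0| + |g 0| := abs_add_le _ _
    _ ≤ k + |g 0| := by have := h; linarith
    _ = |g 0| + k := by ring

/-! ### The one-step lintegral estimate -/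

lemma onestep (ε : NNReal) (hε : ((ε:ℝ)) ≤ 1) {t : ℝ} (ht : 0 ≤ t) (g : ℕ → ℝ)
    (hg : ∀ x : ℕ, |g (x+1) - g x| ≤ 1) :
    ∫⁻ y, ENNReal.ofReal (Real.exp (t * g y)) ∂(pi' ε)
      ≤ ENNReal.ofReal (Real.exp (t * (∫ y, g y ∂(pi' ε))
          + (ε:ℝ) * psi t + (ε:ℝ)^2 * Cc t)) := by
  set e : ℝ := (ε:ℝ) with he
  have he0 : 0 ≤ e := ε.coe_nonneg
  set u : ℕ → ℝ := fun y => g y - g 0 with hu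
  have hu0 : u 0 = 0 := by simp [hu]
  have huy : ∀ y : ℕ, |u y| ≤ y := fun y => by simpa [hu] using lip_growth hg 0 y
  have hppR : pp ε = ppR e := pp_eq_ppR ε
  have hSe : Summable (fun y => ppR e y * Real.exp (t * u y)) := summable_mul_exp e t he0 ht u huy
  have hSu : Summable (fun y => ppR e y * u y) := summable_mul_lin e he0 u huy
  have hgy : ∀ y : ℕ, g y = g 0 + u y := fun y => by simp [hu]
  have hfun : (fun y => pp ε y * Real.exp (t * g y))
      = fun y => Real.exp (t * g 0) * (ppR e y * Real.exp (t * u y)) := by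
    funext y
    rw [hppR, ← mul_assoc, mul_comm (Real.exp (t * g 0)) (ppR e y), mul_assoc, ← Real.exp_add]
    congr 2
    rw [hgy y]; ring
  have hSg : Summable (fun y => pp ε y * Real.exp (t * g y)) := by
    rw [hfun]; exact hSe.mul_left _
  have hL : ∫⁻ y, ENNReal.ofReal (Real.exp (t * g y)) ∂(pi' ε)
      = ENNReal.ofReal (∑' y, pp ε y * Real.exp (t * g y)) :=
    lint_ofReal ε _ (fun y => (Real.exp_pos _).le) hSg
  have htsum : ∑' y, pp ε y * Real.exp (t * g y)
      = Real.exp (t * g 0) * ∑' y, (ppR e y * Real.exp (t * u y)) := by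
    rw [hfun, tsum_mul_left]
  have hppR_tsum : ∑' y, ppR e y = 1 := by rw [← hppR]; exact pp_tsum ε
  have hIg : ∫ y, g y ∂(pi' ε) = g 0 + ∑' y, ppR e y * u y := by
    rw [int_eq ε g (integrable_of_bound ε g (|g 0|) (lip_bound hg))]
    have h2 : (fun y => pp ε y * g y) = fun y => ppR e y * g 0 + ppR e y * u y := by
      funext y; rw [hppR, hgy y]; ring
    rw [h2, Summable.tsum_add ((ppR_summable e).mul_right _) hSu, tsum_mul_right, hppR_tsum]
    ring
  rw [hL, htsum, hIg]
  apply ENNReal.ofReal_le_ofReal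
  have hcore := core e t he0 hε ht u hu0 huy
  calc Real.exp (t * g 0) * ∑' y, (ppR e y * Real.exp (t * u y))
      ≤ Real.exp (t * g 0) * Real.exp (t * (∑' y, ppR e y * u y) + e * psi t + e^2 * Cc t) :=
        mul_le_mul_of_nonneg_left hcore (Real.exp_pos _).le
    _ = Real.exp (t * (g 0 + ∑' y, ppR e y * u y) + e * psi t + e^2 * Cc t) := by
        rw [← Real.exp_add]; congr 1; ring


/-! ### Smoothing operator and induction -/

noncomputable def T (ε : NNReal) (g : ℕ → ℝ) (x : ℕ) : ℝ := ∫ y, g (x + y) ∂(pi' ε)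

lemma shift_bound {g : ℕ → ℝ} (hg : ∀ x : ℕ, |g (x+1) - g x| ≤ 1) (x : ℕ) :
    ∀ k : ℕ, |g (x + k)| ≤ (|g 0| + x) + k := by
  intro k
  have := lip_bound hg (x + k)
  push_cast at this ⊢
  linarith

lemma integrable_shift (ε : NNReal) {g : ℕ → ℝ} (hg : ∀ x : ℕ, |g (x+1) - g x| ≤ 1) (x : ℕ) :
    Integrable (fun y => g (x + y)) (pi' ε) :=
  integrable_of_bound ε _ (|g 0| + x) (shift_bound hg x)

lemma T_lip (ε : NNReal) {g : ℕ → ℝ} (hg : ∀ x : ℕ, |g (x+1) - g x| ≤ 1) :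
    ∀ x : ℕ, |T ε g (x+1) - T ε g x| ≤ 1 := by
  intro x
  have h1 : Integrable (fun y => g ((x+1) + y)) (pi' ε) := integrable_shift ε hg (x+1)
  have h2 : Integrable (fun y => g (x + y)) (pi' ε) := integrable_shift ε hg x
  have hb : ∀ y : ℕ, |g ((x+1)+y) - g (x+y)| ≤ 1 := by
    intro y
    have h := hg (x + y)
    rw [show (x+1)+y = (x+y)+1 by omega]
    exact h
  have hTT : T ε g (x+1) - T ε g x = ∫ y, (g ((x+1) + y) - g (x + y)) ∂(pi' ε) := by
    rw [T, T, integral_sub h1 h2]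
  rw [hTT]
  calc |∫ y, (g ((x+1)+y) - g (x+y)) ∂(pi' ε)|
      ≤ ∫ y, |g ((x+1)+y) - g (x+y)| ∂(pi' ε) := by
        simpa [Real.norm_eq_abs] using
          norm_integral_le_integral_norm (μ := pi' ε) (fun y => g ((x+1)+y) - g (x+y))
    _ ≤ ∫ _, (1:ℝ) ∂(pi' ε) := integral_mono (h1.sub h2).abs (integrable_const 1) hb
    _ = 1 := by simp

lemma pi_zero : pi' 0 = Measure.dirac 0 := by
  apply MeasureTheory.Measure.ext_iff_singleton.mpr
  intro k
  rw [psing, Measure.dirac_apply' _ (measurableSet_singleton k)]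
  cases k with
  | zero => simp [pp_def]
  | succ n =>
      have : pp 0 (n+1) = 0 := by
        simp [pp_def, zero_pow (Nat.succ_ne_zero n)]
      rw [this]
      simp [Set.indicator_of_notMem]

lemma key (t : ℝ) (ht : 0 ≤ t) (ε : NNReal) (hε : ((ε:ℝ)) ≤ 1) :
    ∀ (j : ℕ) (g : ℕ → ℝ), (∀ x : ℕ, |g (x+1) - g x| ≤ 1) →
    ∫⁻ k, ENNReal.ofReal (Real.exp (t * g k)) ∂(pi' ((j : NNReal) * ε))
      ≤ ENNReal.ofReal (Real.exp (t * (∫ k, g k ∂(pi' ((j : NNReal) * ε)))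
          + (j : ℝ) * ((ε:ℝ) * psi t + (ε:ℝ)^2 * Cc t))) := by
  intro j
  induction j with
  | zero =>
      intro g hg
      have h0 : ((0 : ℕ) : NNReal) * ε = 0 := by simp
      rw [h0, pi_zero, lintegral_dirac, integral_dirac]
      simp
  | succ j ih =>
      intro g hg
      set D : ℝ := (ε:ℝ) * psi t + (ε:ℝ)^2 * Cc t with hD
      have hco : ((j+1 : ℕ) : NNReal) * ε = (j : ℕ) * ε + ε := by push_cast; ring
      rw [hco, conv_lint]
      have hTlip := T_lip ε hg
      have hstep : ∀ x : ℕ, ∫⁻ y, ENNReal.ofReal (Real.exp (t * g (x + y))) ∂(pi' ε)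
          ≤ ENNReal.ofReal (Real.exp (t * T ε g x)) * ENNReal.ofReal (Real.exp D) := by
        intro x
        have h := onestep ε hε ht (fun y => g (x + y)) (fun y => by
          rw [show x + (y+1) = (x+y)+1 from rfl]
          exact hg (x+y))
        rw [← ENNReal.ofReal_mul (Real.exp_pos _).le, ← Real.exp_add]
        calc ∫⁻ y, ENNReal.ofReal (Real.exp (t * g (x + y))) ∂(pi' ε)
            ≤ ENNReal.ofReal (Real.exp (t * (∫ y, g (x+y) ∂(pi' ε))
                + (ε:ℝ) * psi t + (ε:ℝ)^2 * Cc t)) := h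
          _ = ENNReal.ofReal (Real.exp (t * T ε g x + D)) := by
              rw [hD, T]; congr 2; ring
      have hmeas : Measurable (fun x : ℕ => ENNReal.ofReal (Real.exp (t * T ε g x))) :=
        measurable_of_countable _
      have hconv_mean : ∫ k, g k ∂(pi' ((j : ℕ) * ε + ε)) = ∫ x, T ε g x ∂(pi' ((j : ℕ) * ε)) :=
        conv_int ((j : ℕ) * ε) ε g (|g 0|) (lip_bound hg)
      calc ∫⁻ x, (∫⁻ y, ENNReal.ofReal (Real.exp (t * g (x + y))) ∂(pi' ε)) ∂(pi' ((j : ℕ) * ε))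
          ≤ ∫⁻ x, ENNReal.ofReal (Real.exp (t * T ε g x)) * ENNReal.ofReal (Real.exp D)
              ∂(pi' ((j : ℕ) * ε)) := lintegral_mono hstep
        _ = (∫⁻ x, ENNReal.ofReal (Real.exp (t * T ε g x)) ∂(pi' ((j : ℕ) * ε)))
              * ENNReal.ofReal (Real.exp D) := lintegral_mul_const _ hmeas
        _ ≤ ENNReal.ofReal (Real.exp (t * (∫ x, T ε g x ∂(pi' ((j : ℕ) * ε))) + (j : ℝ) * D))
              * ENNReal.ofReal (Real.exp D) := mul_le_mul_left (ih (T ε g) hTlip) _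
        _ = ENNReal.ofReal (Real.exp (t * (∫ k, g k ∂(pi' ((j : ℕ) * ε + ε)))
              + ((j+1 : ℕ) : ℝ) * D)) := by
            rw [← ENNReal.ofReal_mul (Real.exp_pos _).le, ← Real.exp_add, hconv_mean]
            congr 2
            push_cast
            ring


/-! ### The MGF bound -/

lemma mgf_bound (lam : NNReal) (hlam : 0 < lam) {t : ℝ} (ht : 0 ≤ t) (h : ℕ → ℝ)
    (hlip : ∀ x : ℕ, |h (x+1) - h x| ≤ 1) :
    ∫⁻ k, ENNReal.ofReal (Real.exp (t * h k)) ∂(pi' lam)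
      ≤ ENNReal.ofReal (Real.exp (t * (∫ k, h k ∂(pi' lam)) + (lam:ℝ) * psi t)) := by
  set A := ∫⁻ k, ENNReal.ofReal (Real.exp (t * h k)) ∂(pi' lam) with hA
  set B := t * (∫ k, h k ∂(pi' lam)) + (lam:ℝ) * psi t with hB
  have hlamr : (0:ℝ) < (lam:ℝ) := NNReal.coe_pos.mpr hlam
  have hseq : ∀ n : ℕ, (lam:ℝ) ≤ n → A ≤ ENNReal.ofReal (Real.exp (B + (lam:ℝ)^2 * Cc t / n)) := by
    intro n hn
    have hnpos : (0:ℝ) < (n:ℝ) := lt_of_lt_of_le hlamr hn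
    have hn0 : n ≠ 0 := by
      intro hc; rw [hc] at hnpos; simp at hnpos
    set ε : NNReal := lam / (n : NNReal) with hε
    have hcoe : ((ε : NNReal) : ℝ) = (lam:ℝ) / n := by
      rw [hε, NNReal.coe_div]; norm_num
    have hε1 : ((ε : NNReal) : ℝ) ≤ 1 := by
      rw [hcoe, div_le_one hnpos]; exact hn
    have hlameq : ((n : ℕ) : NNReal) * ε = lam := by
      rw [hε, mul_comm, div_mul_cancel₀]
      exact Nat.cast_ne_zero.mpr hn0
    have hkey := key t ht ε hε1 n h hlip
    rw [hlameq] at hkey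
    refine le_trans hkey (ENNReal.ofReal_le_ofReal (Real.exp_le_exp.mpr (le_of_eq ?_)))
    rw [hB, hcoe]
    have hne : (n:ℝ) ≠ 0 := ne_of_gt hnpos
    field_simp
    ring
  have hAne : A ≠ ⊤ := by
    have h1 := hseq (max 1 ⌈(lam:ℝ)⌉₊) (le_trans (Nat.le_ceil _) (by exact_mod_cast le_max_right _ _))
    exact ne_top_of_le_ne_top ENNReal.ofReal_ne_top h1
  have htend : Tendsto (fun n : ℕ => Real.exp (B + (lam:ℝ)^2 * Cc t / n)) atTop
      (nhds (Real.exp B)) := by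
    have h1 : Tendsto (fun n : ℕ => (lam:ℝ)^2 * Cc t / n) atTop (nhds 0) :=
      tendsto_const_div_atTop_nhds_zero_nat _
    have h2 : Tendsto (fun n : ℕ => B + (lam:ℝ)^2 * Cc t / n) atTop (nhds (B + 0)) :=
      tendsto_const_nhds.add h1
    rw [add_zero] at h2
    exact (Real.continuous_exp.tendsto B).comp h2
  have hto : A.toReal ≤ Real.exp B := by
    apply ge_of_tendsto htend
    filter_upwards [eventually_ge_atTop ⌈(lam:ℝ)⌉₊] with n hn
    have h1 := hseq n (le_trans (Nat.le_ceil _) (by exact_mod_cast hn))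
    exact ENNReal.toReal_le_of_le_ofReal (Real.exp_pos _).le h1
  calc A = ENNReal.ofReal (A.toReal) := (ENNReal.ofReal_toReal hAne).symm
    _ ≤ ENNReal.ofReal (Real.exp B) := ENNReal.ofReal_le_ofReal hto

end PoissonConc

open PoissonConc in
/-- Concentration for Poisson random variables (Bobkov–Ledoux): if `X ~ Poisson(λ)`
with `λ > 0` and `h : ℕ → ℝ` satisfies `|h(x+1) − h(x)| ≤ 1` for all `x`, then for
every `b ≥ 0`, `P(h(X) − E[h(X)] ≥ b) ≤ exp(−(b/4) log(1 + b/(2λ)))`. -/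
theorem poisson_lipschitz_concentration (lam : NNReal) (hlam : 0 < lam)
    (h : ℕ → ℝ) (hlip : ∀ x : ℕ, |h (x + 1) - h x| ≤ 1)
    (hint : Integrable h (poissonMeasure lam))
    (b : ℝ) (hb : 0 ≤ b) :
    ((poissonMeasure lam) {x | b ≤ h x - ∫ y, h y ∂(poissonMeasure lam)}).toReal ≤
      Real.exp (-(b / 4) * Real.log (1 + b / (2 * lam))) := by
  have hlamr : (0:ℝ) < (lam:ℝ) := NNReal.coe_pos.mpr hlam
  set Eh := ∫ y, h y ∂(poissonMeasure lam) with hEh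
  set u : ℝ := b / (2 * (lam:ℝ)) with hu
  have hu0 : 0 ≤ u := div_nonneg hb (by positivity)
  set t : ℝ := Real.log (1 + u) with htdef
  have h1u : (0:ℝ) < 1 + u := by linarith
  have ht : 0 ≤ t := Real.log_nonneg (by linarith)
  have hexp_t : Real.exp t = 1 + u := Real.exp_log h1u
  have hmgf := mgf_bound lam hlam ht h hlip
  set s : Set ℕ := {x | b ≤ h x - Eh} with hs
  set c : ℝ≥0∞ := ENNReal.ofReal (Real.exp (t*b + t*Eh)) with hc
  have hchern : (poissonMeasure lam) s * c
      ≤ ENNReal.ofReal (Real.exp (t*Eh + (lam:ℝ) * psi t)) := by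
    have hpt : ∀ x ∈ s, c ≤ ENNReal.ofReal (Real.exp (t * h x)) := by
      intro x hx
      apply ENNReal.ofReal_le_ofReal
      apply Real.exp_le_exp.mpr
      have hxb : b ≤ h x - Eh := hx
      nlinarith
    calc (poissonMeasure lam) s * c = c * (poissonMeasure lam) s := mul_comm _ _
      _ = ∫⁻ _ in s, c ∂(poissonMeasure lam) := (setLIntegral_const s c).symm
      _ ≤ ∫⁻ x in s, ENNReal.ofReal (Real.exp (t * h x)) ∂(poissonMeasure lam) :=
          setLIntegral_mono (measurable_of_countable _) hpt
      _ ≤ ∫⁻ x, ENNReal.ofReal (Real.exp (t * h x)) ∂(poissonMeasure lam) :=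
          setLIntegral_le_lintegral s _
      _ ≤ ENNReal.ofReal (Real.exp (t*Eh + (lam:ℝ) * psi t)) := by
          refine le_trans hmgf (ENNReal.ofReal_le_ofReal (Real.exp_le_exp.mpr (le_of_eq ?_)))
          rw [hEh]
  have hcne0 : c ≠ 0 := by
    rw [hc]; simp [Real.exp_pos]
  have hcnetop : c ≠ ⊤ := by rw [hc]; exact ENNReal.ofReal_ne_top
  have hdiv : (poissonMeasure lam) s
      ≤ ENNReal.ofReal (Real.exp (t*Eh + (lam:ℝ) * psi t)) / c :=
    (ENNReal.le_div_iff_mul_le (Or.inl hcne0) (Or.inl hcnetop)).mpr hchern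
  have hdiv2 : ENNReal.ofReal (Real.exp (t*Eh + (lam:ℝ) * psi t)) / c
      = ENNReal.ofReal (Real.exp ((lam:ℝ) * psi t - t*b)) := by
    rw [hc, ← ENNReal.ofReal_div_of_pos (Real.exp_pos _), ← Real.exp_sub]
    congr 1
    ring
  have hμs : (poissonMeasure lam) s ≤ ENNReal.ofReal (Real.exp ((lam:ℝ) * psi t - t*b)) :=
    hdiv2 ▸ hdiv
  have hfinal : (lam:ℝ) * psi t - t*b ≤ -(b/4) * t := by
    have hpsit : psi t = u - t := by
      unfold psi; rw [hexp_t]; ring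
    have hlt : u / (1+u) ≤ t := by
      have hh := Real.log_le_sub_one_of_pos (show (0:ℝ) < (1+u)⁻¹ by positivity)
      rw [Real.log_inv] at hh
      have he2 : (1+u)⁻¹ - 1 = -(u/(1+u)) := by field_simp; ring
      rw [he2] at hh
      rw [htdef]
      linarith
    have hlamu : (lam:ℝ) * u = b / 2 := by
      rw [hu]
      field_simp
    have htb : 0 ≤ t * b := mul_nonneg ht hb
    have h3 : u ≤ t * (1+u) := by
      rw [div_le_iff₀ h1u] at hlt
      linarith
    have h2 : b ≤ t * (2*(lam:ℝ) + b) := by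
      have h4 := mul_le_mul_of_nonneg_left h3 (by positivity : (0:ℝ) ≤ 2*(lam:ℝ))
      nlinarith
    rw [hpsit]
    nlinarith
  calc ((poissonMeasure lam) s).toReal
      ≤ Real.exp ((lam:ℝ) * psi t - t*b) :=
        ENNReal.toReal_le_of_le_ofReal (Real.exp_pos _).le hμs
    _ ≤ Real.exp (-(b / 4) * t) := Real.exp_le_exp.mpr hfinal
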